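/- arXiv:1710.07077 — 3 statements merged into one kernel-verified Lean document; each statement's English description precedes it below -/
import Mathlib

section
/- Let w ∈ H²_per(P) solve −|∇ + ik|² w = ψ w on P = (0,2π]^d with periodic boundary conditions where k ∈ B, and suppose ψ ∈ H^{a}_per(P) for some a > d + τ with τ ≥ 0 given. If the Fourier coefficient sequence of w lies in l²_τ(Z^d), then it lies in l²_{τ+2}(Z^d); equivalently, w ∈ H^{τ+2}_per(P). -/
open MeasureTheory Complex Real RealInnerProductSpace

noncomputable section

abbrev Rd (d : ℕ) := EuclideanSpace ℝ (Fin d)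

def zEmbed {d : ℕ} (m : Fin d → ℤ) : Rd d := WithLp.toLp 2 (fun j => (m j : ℝ))

def Bz (d : ℕ) : Set (Rd d) := {k | ∀ j, k j ∈ Set.Ioc (-(1/2) : ℝ) (1/2)}

def Pcell (d : ℕ) : Set (Rd d) := {x | ∀ j, x j ∈ Set.Ioc (0 : ℝ) (2 * π)}

/-- Fourier transform with the paper's normalization. -/
def fhat {d : ℕ} (f : Rd d → ℂ) (k : Rd d) : ℂ :=
  ((2 * π : ℝ) ^ (-(d : ℤ)) : ℝ) • ∫ x, f x * Complex.exp (-Complex.I * ((inner ℝ k x : ℝ) : ℂ))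

/-- Bloch transform. -/
def bloch {d : ℕ} (f : Rd d → ℂ) (x k : Rd d) : ℂ :=
  ∑' m : Fin d → ℤ, fhat f (k + zEmbed m) * Complex.exp (Complex.I * ((inner ℝ (zEmbed m) x : ℝ) : ℂ))

/-- Membership in H^s(ℝ^d) via the Fourier characterization. -/
def MemHs {d : ℕ} (s : ℝ) (f : Rd d → ℂ) : Prop :=
  Integrable (fun k : Rd d => (1 + ‖k‖ ^ 2) ^ s * ‖fhat f k‖ ^ 2)

/-- Fourier coefficients of a 2π-periodic function. -/
def fcoef {d : ℕ} (g : Rd d → ℂ) (n : Fin d → ℤ) : ℂ :=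
  ((2 * π : ℝ) ^ (-(d : ℤ)) : ℝ) •
    ∫ x in Pcell d, g x * Complex.exp (-Complex.I * ((inner ℝ (zEmbed n) x : ℝ) : ℂ))

/-- The H^s_per(P) norm via Fourier coefficients. -/
def hsPerNorm {d : ℕ} (s : ℝ) (g : Rd d → ℂ) : ℝ :=
  (∑' n : Fin d → ℤ, (1 + ‖zEmbed n‖ ^ (2 * s)) * ‖fcoef g n‖ ^ 2) ^ (1/2 : ℝ)

def MemHsPer {d : ℕ} (s : ℝ) (g : Rd d → ℂ) : Prop :=
  Summable (fun n : Fin d → ℤ => (1 + ‖zEmbed n‖ ^ (2 * s)) * ‖fcoef g n‖ ^ 2)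

/-- The L¹(B,H^s_per(P)) norm; `u x k` is the value of ũ(x,k). -/
def l1HsNorm {d : ℕ} (s : ℝ) (u : Rd d → Rd d → ℂ) : ℝ :=
  ∫ k in Bz d, hsPerNorm s (fun x => u x k)

/-- 2π-periodicity in the x variable. -/
def XPer {d : ℕ} (u : Rd d → Rd d → ℂ) : Prop :=
  ∀ x k j, u (x + (2 * π) • (EuclideanSpace.single j (1:ℝ))) k = u x k

/-- Quasi-periodicity in the k variable. -/
def KQPer {d : ℕ} (u : Rd d → Rd d → ℂ) : Prop :=
  ∀ x k j, u x (k + EuclideanSpace.single j (1:ℝ)) =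
    Complex.exp (-Complex.I * (x j : ℂ)) * u x k

/-- Convolution over the Brillouin zone. -/
def convB {d : ℕ} (u v : Rd d → Rd d → ℂ) (x k : Rd d) : ℂ :=
  ∫ l in Bz d, u x (k - l) * v x l

/-- Convolution over ℝ^d. -/
def convR {d : ℕ} (f g : Rd d → ℂ) (κ : Rd d) : ℂ := ∫ l, f (κ - l) * g l

/-- Partial derivative. -/
def pderiv {d : ℕ} (j : Fin d) (u : Rd d → ℂ) (x : Rd d) : ℂ :=
  fderiv ℝ u x (EuclideanSpace.single j (1:ℝ))

def lapl {d : ℕ} (u : Rd d → ℂ) (x : Rd d) : ℂ := ∑ j, pderiv j (pderiv j u) x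

/-- The Bloch operator L(k) = -χ₁|∇+ik|² + χ₂. -/
def LkOp {d : ℕ} (χ1 χ2 : Rd d → ℝ) (k : Rd d) (u : Rd d → ℂ) (x : Rd d) : ℂ :=
  -(χ1 x : ℂ) * (lapl u x + 2 * Complex.I * (∑ j, (k j : ℂ) * pderiv j u x)
    - ((‖k‖ ^ 2 : ℝ) : ℂ) * u x) + (χ2 x : ℂ) * u x

/-- Periodicity of a complex function. -/
def PerC {d : ℕ} (u : Rd d → ℂ) : Prop :=
  ∀ x j, u (x + (2 * π) • (EuclideanSpace.single j (1:ℝ))) = u x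

def PerR {d : ℕ} (u : Rd d → ℝ) : Prop :=
  ∀ x j, u (x + (2 * π) • (EuclideanSpace.single j (1:ℝ))) = u x

/-- L²(P) norm. -/
def L2PNorm {d : ℕ} (f : Rd d → ℂ) : ℝ := (∫ x in Pcell d, ‖f x‖ ^ 2) ^ (1/2 : ℝ)

/-- Weighted l²_{s/d} norm on sequences indexed by ℕ (n ↦ n+1). -/
def l2sdNorm (d : ℕ) (s : ℝ) (v : ℕ → ℂ) : ℝ :=
  (∑' n : ℕ, ((n : ℝ) + 1) ^ (2 * s / d) * ‖v n‖ ^ 2) ^ (1/2 : ℝ)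

end


namespace EllipticAux

lemma sumZ {p : ℝ} (hp : 1 < p) : Summable (fun z : ℤ => ((1:ℝ) + |(z:ℝ)|) ^ (-p)) := by
  have h := (Real.summable_one_div_nat_add_rpow 1 p).mpr hp
  have hnat : Summable (fun n : ℕ => ((1:ℝ) + |(n:ℝ)|) ^ (-p)) := by
    refine h.congr fun n => ?_
    rw [_root_.abs_of_nonneg (by positivity), _root_.abs_of_nonneg (by positivity),
      Real.rpow_neg (by positivity), one_div, add_comm]
  rw [summable_int_iff_summable_nat_and_neg]
  constructor
  · exact hnat.congr fun n => by norm_num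
  · exact hnat.congr fun n => by push_cast; rw [abs_neg]

lemma sumPi (d : ℕ) {g : ℤ → ℝ} (hg0 : ∀ z, 0 ≤ g z) (hg : Summable g) :
    Summable (fun m : Fin d → ℤ => ∏ j, g (m j)) := by
  induction d with
  | zero => exact .of_finite
  | succ d ih =>
    have ih0 : ∀ m : Fin d → ℤ, 0 ≤ ∏ j, g (m j) :=
      fun m => Finset.prod_nonneg fun j _ => hg0 _
    have base := Summable.mul_of_nonneg (f := g) (g := fun m : Fin d → ℤ => ∏ j, g (m j))
      hg ih (Pi.le_def.mpr hg0) (Pi.le_def.mpr ih0)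
    rw [← (Fin.consEquiv (fun _ : Fin (d+1) => ℤ)).summable_iff]
    refine base.congr fun q => ?_
    simp [Fin.consEquiv, Fin.prod_univ_succ]

lemma coord_le {d : ℕ} (m : Fin d → ℤ) (i : Fin d) : |(m i : ℝ)| ≤ ‖zEmbed m‖ := by
  rw [EuclideanSpace.norm_eq, Real.le_sqrt (abs_nonneg _) (by positivity), _root_.sq_abs]
  have h : (m i:ℝ)^2 = ‖(zEmbed m) i‖^2 := by simp [zEmbed, _root_.sq_abs]
  rw [h]
  exact Finset.single_le_sum (f := fun j => ‖(zEmbed m) j‖^2)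
    (fun j _ => by positivity) (Finset.mem_univ i)

lemma summable_lattice (d : ℕ) {s : ℝ} (hs : (d:ℝ) < s) :
    Summable (fun m : Fin d → ℤ => ((1:ℝ) + ‖zEmbed m‖ ^ s)⁻¹) := by
  rcases Nat.eq_zero_or_pos d with rfl | hd
  · exact .of_finite
  have hd' : (0:ℝ) < d := by exact_mod_cast hd
  have hs0 : 0 < s := lt_of_le_of_lt (by positivity) hs
  set p := s / d with hpdef
  have hp : 1 < p := (one_lt_div hd').mpr hs
  have hg0 : ∀ z : ℤ, 0 ≤ ((1:ℝ) + |(z:ℝ)|) ^ (-p) := fun z => by positivity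
  refine Summable.of_nonneg_of_le (fun m => by positivity)
    (fun m => ?_) ((sumPi d hg0 (sumZ hp)).mul_left ((2:ℝ) ^ s))
  set x := ‖zEmbed m‖ with hx
  have hx0 : 0 ≤ x := norm_nonneg _
  have h1 : ∏ j, ((1:ℝ) + |(m j : ℝ)|) ^ p ≤ ((1:ℝ)+x) ^ s := by
    calc ∏ j, ((1:ℝ) + |(m j : ℝ)|) ^ p ≤ ∏ j : Fin d, ((1:ℝ)+x) ^ p := by
          refine Finset.prod_le_prod (fun j _ => by positivity) (fun j _ => ?_)
          exact Real.rpow_le_rpow (by positivity) (by linarith [coord_le m j]) (le_of_lt (by linarith))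
      _ = ((1:ℝ)+x) ^ (p * d) := by
          rw [Finset.prod_const, Finset.card_univ, Fintype.card_fin,
            ← Real.rpow_natCast (((1:ℝ)+x)^p) d, ← Real.rpow_mul (by positivity)]
      _ = ((1:ℝ)+x) ^ s := by rw [hpdef]; field_simp
  have h2 : ((1:ℝ)+x) ^ s ≤ 2 ^ s * (1 + x ^ s) := by
    have hm : (1:ℝ) + x ≤ 2 * max 1 x := by
      rcases le_total x 1 with h | h
      · simp [max_eq_left h]; linarith
      · rw [max_eq_right h]; linarith
    calc ((1:ℝ)+x) ^ s ≤ (2 * max 1 x) ^ s :=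
          Real.rpow_le_rpow (by positivity) hm hs0.le
      _ = 2 ^ s * (max 1 x) ^ s := Real.mul_rpow (by norm_num) (le_trans zero_le_one (le_max_left 1 x))
      _ ≤ 2 ^ s * (1 + x ^ s) := by
          refine mul_le_mul_of_nonneg_left ?_ (by positivity)
          rcases le_total x 1 with h | h
          · rw [max_eq_left h, Real.one_rpow]; nlinarith [Real.rpow_nonneg hx0 s]
          · rw [max_eq_right h]
            have := Real.one_le_rpow h hs0.le
            nlinarith [Real.rpow_nonneg hx0 s]
  have hprodpos : 0 < ∏ j, ((1:ℝ) + |(m j : ℝ)|) ^ p := Finset.prod_pos fun j _ => by positivity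
  have key : ∏ j, ((1:ℝ) + |(m j : ℝ)|) ^ p ≤ 2 ^ s * (1 + x ^ s) := h1.trans h2
  have hxs : (0:ℝ) < 1 + x ^ s := by positivity
  have hmain : ((1:ℝ) + x ^ s)⁻¹ ≤ 2 ^ s * (∏ j, ((1:ℝ) + |(m j : ℝ)|) ^ p)⁻¹ := by
    rw [inv_eq_one_div, ← div_eq_mul_inv, div_le_div_iff₀ hxs hprodpos]
    linarith [key]
  refine hmain.trans (le_of_eq ?_)
  rw [← Finset.prod_inv_distrib]
  congr 1
  exact Finset.prod_congr rfl fun j _ => by rw [← Real.rpow_neg (by positivity)]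

lemma rpow_mul_le_rpow_add {x p q : ℝ} (hx : 0 ≤ x) (hp : 0 ≤ p) (hq : 0 ≤ q) :
    x ^ p * x ^ q ≤ x ^ (p + q) := by
  rcases eq_or_ne (p + q) 0 with h | h
  · have hp0 : p = 0 := by linarith
    have hq0 : q = 0 := by linarith
    simp [hp0, hq0]
  · rw [Real.rpow_add' hx h]

lemma rpow_add_le {x p q : ℝ} (hx : 0 ≤ x) (hp : 0 ≤ p) (hq : 0 ≤ q) :
    x ^ p + x ^ q ≤ 1 + x ^ (p + q) := by
  rcases le_total x 1 with h | h
  · have h1 : x ^ p ≤ 1 := Real.rpow_le_one hx h hp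
    have h2 : x ^ q ≤ 1 := Real.rpow_le_one hx h hq
    have h3 : x ^ p * x ^ q ≤ x ^ (p+q) := rpow_mul_le_rpow_add hx hp hq
    nlinarith [Real.rpow_nonneg hx p, Real.rpow_nonneg hx q]
  · have hx0 : 0 < x := lt_of_lt_of_le one_pos h
    have h1 : 1 ≤ x ^ p := Real.one_le_rpow h hp
    have h2 : 1 ≤ x ^ q := Real.one_le_rpow h hq
    have h3 : x ^ (p+q) = x ^ p * x ^ q := Real.rpow_add hx0 p q
    nlinarith

lemma peetre {t x y : ℝ} (ht : 0 ≤ t) (hx : 0 ≤ x) (hy : 0 ≤ y) :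
    1 + (x + y) ^ t ≤ 2 ^ t * ((1 + x ^ t) * (1 + y ^ t)) := by
  have h1 : (x + y) ^ t ≤ 2 ^ t * (x ^ t + y ^ t) := by
    have hm : x + y ≤ 2 * max x y := by
      rcases le_total x y with h | h
      · rw [max_eq_right h]; linarith
      · rw [max_eq_left h]; linarith
    calc (x + y) ^ t ≤ (2 * max x y) ^ t :=
          Real.rpow_le_rpow (by positivity) hm ht
      _ = 2 ^ t * (max x y) ^ t := Real.mul_rpow (by norm_num) (le_max_iff.mpr (Or.inl hx))
      _ ≤ 2 ^ t * (x ^ t + y ^ t) := by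
          refine mul_le_mul_of_nonneg_left ?_ (by positivity)
          rcases le_total x y with h | h
          · rw [max_eq_right h]; nlinarith [Real.rpow_nonneg hx t]
          · rw [max_eq_left h]; nlinarith [Real.rpow_nonneg hy t]
  have h2 : (1:ℝ) ≤ 2 ^ t := Real.one_le_rpow one_le_two ht
  nlinarith [Real.rpow_nonneg hx t, Real.rpow_nonneg hy t,
    mul_nonneg (Real.rpow_nonneg hx t) (Real.rpow_nonneg hy t)]

lemma tsum_mul_sq_le {ι : Type*} (F G : ι → ℝ) (hF : ∀ i, 0 ≤ F i) (hG : ∀ i, 0 ≤ G i)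
    (hF2 : Summable fun i => F i ^ 2) (hG2 : Summable fun i => G i ^ 2) :
    (∑' i, F i * G i) ^ 2 ≤ (∑' i, F i ^ 2) * (∑' i, G i ^ 2) := by
  have h2 : ∀ x : ℝ, x ^ (2:ℝ) = x ^ 2 := fun x => by
    rw [show ((2:ℝ)) = ((2:ℕ):ℝ) by norm_num, Real.rpow_natCast]
  have hF2' : Summable fun i => F i ^ (2:ℝ) := hF2.congr (fun i => (h2 _).symm)
  have hG2' : Summable fun i => G i ^ (2:ℝ) := hG2.congr (fun i => (h2 _).symm)
  have hconj : (2:ℝ).HolderConjugate 2 := Real.HolderConjugate.two_two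
  have h := Real.inner_le_Lp_mul_Lq_tsum_of_nonneg hconj hF hG hF2' hG2'
  rw [tsum_congr (fun i => h2 (F i)), tsum_congr (fun i => h2 (G i))] at h
  have hSF : 0 ≤ ∑' i, F i ^ 2 := tsum_nonneg fun i => sq_nonneg _
  have hSG : 0 ≤ ∑' i, G i ^ 2 := tsum_nonneg fun i => sq_nonneg _
  have hnn : 0 ≤ ∑' i, F i * G i := tsum_nonneg fun i => mul_nonneg (hF i) (hG i)
  have key : ((∑' i, F i ^ 2) ^ ((1:ℝ)/2) * (∑' i, G i ^ 2) ^ ((1:ℝ)/2)) ^ 2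
      = (∑' i, F i ^ 2) * (∑' i, G i ^ 2) := by
    rw [mul_pow, ← h2, ← h2, ← Real.rpow_mul hSF, ← Real.rpow_mul hSG]
    norm_num
  calc (∑' i, F i * G i) ^ 2
      ≤ ((∑' i, F i ^ 2) ^ ((1:ℝ)/2) * (∑' i, G i ^ 2) ^ ((1:ℝ)/2)) ^ 2 := by
        apply pow_le_pow_left₀ hnn h
    _ = _ := key

lemma summable_mul_conv {ι : Type*} (F G : ι → ℝ) (hF : ∀ i, 0 ≤ F i) (hG : ∀ i, 0 ≤ G i)
    (hF2 : Summable fun i => F i ^ 2) (hG2 : Summable fun i => G i ^ 2) :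
    Summable fun i => F i * G i := by
  have h2 : ∀ x : ℝ, x ^ (2:ℝ) = x ^ 2 := fun x => by
    rw [show ((2:ℝ)) = ((2:ℕ):ℝ) by norm_num, Real.rpow_natCast]
  exact Real.summable_mul_of_Lp_Lq_of_nonneg Real.HolderConjugate.two_two hF hG
    (hF2.congr (fun i => (h2 _).symm)) (hG2.congr (fun i => (h2 _).symm))

end EllipticAux

set_option maxHeartbeats 1000000 in
/-- elliptic regularity bootstrap for a periodic solution of
−|∇+ik|²w = ψw, at the level of Fourier coefficients. -/
theorem elliptic_bootstrap (d : ℕ) (τ a : ℝ) (hτ : 0 ≤ τ) (ha : a > d + τ)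
    (k : Rd d) (hk : k ∈ Bz d) (w ψ : Rd d → ℂ)
    (hw : PerC w) (hψ : PerC ψ)
    (hw2 : MemHsPer 2 w)
    (hψa : MemHsPer a ψ)
    -- the Fourier-coefficient form of −|∇+ik|²w = ψw :
    (heq : ∀ n : Fin d → ℤ,
      (((‖zEmbed n‖ ^ 2 + 2 * (inner ℝ k (zEmbed n) : ℝ) + ‖k‖ ^ 2 : ℝ)) : ℂ) * fcoef w n =
        ∑' j : Fin d → ℤ, fcoef ψ (n - j) * fcoef w j)
    (hWτ : MemHsPer τ w) :
    MemHsPer (τ + 2) w := by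
  classical
  have hd0 : (0:ℝ) ≤ d := Nat.cast_nonneg d
  have hτ2 : (0:ℝ) ≤ 2*τ := by linarith
  have ha0 : (0:ℝ) < a := by linarith
  -- notation
  set Φ : (Fin d → ℤ) → ℝ := fun m => ‖fcoef ψ m‖ with hΦdef
  set V : (Fin d → ℤ) → ℝ := fun m => ‖fcoef w m‖ with hVdef
  set wa : (Fin d → ℤ) → ℝ := fun m => 1 + ‖zEmbed m‖ ^ (2*a) with hwadef
  set wt : (Fin d → ℤ) → ℝ := fun m => 1 + ‖zEmbed m‖ ^ (2*τ) with hwtdef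
  have hwa1 : ∀ m, (1:ℝ) ≤ wa m := fun m =>
    le_add_of_nonneg_right (Real.rpow_nonneg (norm_nonneg _) _)
  have hwt1 : ∀ m, (1:ℝ) ≤ wt m := fun m =>
    le_add_of_nonneg_right (Real.rpow_nonneg (norm_nonneg _) _)
  have hwapos : ∀ m, (0:ℝ) < wa m := fun m => lt_of_lt_of_le one_pos (hwa1 m)
  have hwtpos : ∀ m, (0:ℝ) < wt m := fun m => lt_of_lt_of_le one_pos (hwt1 m)
  have hΦ0 : ∀ m, 0 ≤ Φ m := fun m => norm_nonneg _
  have hV0 : ∀ m, 0 ≤ V m := fun m => norm_nonneg _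
  have hA : Summable (fun m => wa m * Φ m ^ 2) := hψa
  have hB : Summable (fun m => wt m * V m ^ 2) := hWτ
  have hA0 : ∀ m, 0 ≤ wa m * Φ m ^ 2 := fun m => mul_nonneg (hwapos m).le (sq_nonneg _)
  have hB0 : ∀ m, 0 ≤ wt m * V m ^ 2 := fun m => mul_nonneg (hwtpos m).le (sq_nonneg _)
  set MA : ℝ := ∑' m, wa m * Φ m ^ 2 with hMAdef
  have hMA : ∀ m, wa m * Φ m ^ 2 ≤ MA := fun m => Summable.le_tsum hA m (fun b _ => hA0 b)
  -- lattice summability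
  have hda : (d:ℝ) < 2*a := by linarith
  have hdaτ : (d:ℝ) < 2*(a-τ) := by linarith
  have hSa : Summable (fun m : Fin d → ℤ => (wa m)⁻¹) := EllipticAux.summable_lattice d hda
  have hSaτ : Summable (fun m : Fin d → ℤ => ((1:ℝ) + ‖zEmbed m‖ ^ (2*(a-τ)))⁻¹) :=
    EllipticAux.summable_lattice d hdaτ
  -- the convolution
  set P : (Fin d → ℤ) → ℂ := fun n => ∑' j : Fin d → ℤ, fcoef ψ (n - j) * fcoef w j with hPdef
  -- the weight estimate
  set K : ℝ := 2 ^ (2*τ) * 2 with hKdef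
  have hK0 : 0 < K := by positivity
  have hweight : ∀ n j : Fin d → ℤ,
      wt n * (wa (n-j) * wt j)⁻¹ ≤ K * ((1:ℝ) + ‖zEmbed (n-j)‖ ^ (2*(a-τ)))⁻¹ := by
    intro n j
    set x := ‖zEmbed (n-j)‖ with hxdef
    set y := ‖zEmbed j‖ with hydef
    have hx0 : 0 ≤ x := norm_nonneg _
    have hy0 : 0 ≤ y := norm_nonneg _
    have htri : ‖zEmbed n‖ ≤ x + y := by
      have hz : zEmbed n = zEmbed (n - j) + zEmbed j := by
        ext i
        simp [zEmbed]
      rw [hz]; exact norm_add_le _ _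
    have hwtn : wt n ≤ 2 ^ (2*τ) * ((1 + x ^ (2*τ)) * (1 + y ^ (2*τ))) := by
      have h1 : ‖zEmbed n‖ ^ (2*τ) ≤ (x + y) ^ (2*τ) :=
        Real.rpow_le_rpow (norm_nonneg _) htri hτ2
      calc wt n ≤ 1 + (x+y) ^ (2*τ) := by rw [hwtdef]; exact add_le_add_right h1 1
        _ ≤ _ := EllipticAux.peetre hτ2 hx0 hy0
    have hprod : (1 + x ^ (2*τ)) * (1 + x ^ (2*(a-τ))) ≤ 2 * (1 + x ^ (2*a)) := by
      have h1 := EllipticAux.rpow_add_le hx0 hτ2 (by linarith : (0:ℝ) ≤ 2*(a-τ))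
      have h2 := EllipticAux.rpow_mul_le_rpow_add hx0 hτ2 (by linarith : (0:ℝ) ≤ 2*(a-τ))
      have h3 : 2*τ + 2*(a-τ) = 2*a := by ring
      rw [h3] at h1 h2
      nlinarith [Real.rpow_nonneg hx0 (2*τ), Real.rpow_nonneg hx0 (2*(a-τ)),
        Real.rpow_nonneg hx0 (2*a)]
    have hxs : (0:ℝ) < 1 + x ^ (2*(a-τ)) := by positivity
    have hden : (0:ℝ) < wa (n-j) * wt j := mul_pos (hwapos _) (hwtpos _)
    rw [← div_eq_mul_inv, ← div_eq_mul_inv, div_le_div_iff₀ hden hxs]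
    have hwteq : wa (n-j) = 1 + x ^ (2*a) := rfl
    have hwtjeq : wt j = 1 + y ^ (2*τ) := rfl
    calc wt n * (1 + x ^ (2*(a-τ)))
        ≤ (2 ^ (2*τ) * ((1 + x ^ (2*τ)) * (1 + y ^ (2*τ)))) * (1 + x ^ (2*(a-τ))) :=
          mul_le_mul_of_nonneg_right hwtn hxs.le
      _ = 2 ^ (2*τ) * (1 + y ^ (2*τ)) * ((1 + x ^ (2*τ)) * (1 + x ^ (2*(a-τ)))) := by ring
      _ ≤ 2 ^ (2*τ) * (1 + y ^ (2*τ)) * (2 * (1 + x ^ (2*a))) := by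
          refine mul_le_mul_of_nonneg_left hprod ?_
          have : (0:ℝ) ≤ 1 + y ^ (2*τ) := by positivity
          positivity
      _ = K * (wa (n-j) * wt j) := by rw [hwteq, hwtjeq, hKdef]; ring
  -- per-n Cauchy-Schwarz
  set S : (Fin d → ℤ) → ℝ := fun n => ∑' j, (wa (n-j) * Φ (n-j) ^ 2) * (wt j * V j ^ 2)
    with hSdef
  set T : (Fin d → ℤ) → ℝ := fun n => ∑' j, (wa (n-j) * wt j)⁻¹ with hTdef
  have hF2sum : ∀ n, Summable (fun j => (wa (n-j) * Φ (n-j) ^ 2) * (wt j * V j ^ 2)) := by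
    intro n
    refine Summable.of_nonneg_of_le (fun j => mul_nonneg (hA0 _) (hB0 _))
      (fun j => mul_le_mul_of_nonneg_right (hMA (n-j)) (hB0 j)) (hB.mul_left MA)
  have hG2sum : ∀ n, Summable (fun j => (wa (n-j) * wt j)⁻¹) := by
    intro n
    refine Summable.of_nonneg_of_le (fun j => by positivity) (fun j => ?_)
      ((Equiv.subLeft n).summable_iff.mpr hSa)
    show (wa (n-j) * wt j)⁻¹ ≤ (wa (n-j))⁻¹
    rw [mul_inv]
    refine mul_le_of_le_one_right (by positivity) ?_
    exact inv_le_one_of_one_le₀ (hwt1 j)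
  have hS0 : ∀ n, 0 ≤ S n := fun n => tsum_nonneg fun j => mul_nonneg (hA0 _) (hB0 _)
  have hT0 : ∀ n, 0 ≤ T n := fun n => tsum_nonneg fun j => by positivity
  have hPest : ∀ n, ‖P n‖ ^ 2 ≤ S n * T n := by
    intro n
    set F : (Fin d → ℤ) → ℝ := fun j => Real.sqrt ((wa (n-j) * Φ (n-j) ^ 2) * (wt j * V j ^ 2))
      with hFdef
    set G : (Fin d → ℤ) → ℝ := fun j => Real.sqrt ((wa (n-j) * wt j)⁻¹) with hGdef
    have hFG : ∀ j, Φ (n-j) * V j = F j * G j := by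
      intro j
      rw [hFdef, hGdef]
      show _ = Real.sqrt _ * Real.sqrt _
      rw [← Real.sqrt_mul (by positivity)]
      have hne1 : wa (n-j) ≠ 0 := (hwapos _).ne'
      have hne2 : wt j ≠ 0 := (hwtpos _).ne'
      have : (wa (n-j) * Φ (n-j) ^ 2) * (wt j * V j ^ 2) * (wa (n-j) * wt j)⁻¹
          = (Φ (n-j) * V j) ^ 2 := by
        field_simp
      rw [this, Real.sqrt_sq (mul_nonneg (hΦ0 _) (hV0 _))]
    have hFsq : ∀ j, F j ^ 2 = (wa (n-j) * Φ (n-j) ^ 2) * (wt j * V j ^ 2) := fun j =>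
      Real.sq_sqrt (mul_nonneg (hA0 _) (hB0 _))
    have hGsq : ∀ j, G j ^ 2 = (wa (n-j) * wt j)⁻¹ := fun j =>
      Real.sq_sqrt (by positivity)
    have hF2 : Summable (fun j => F j ^ 2) := (hF2sum n).congr fun j => (hFsq j).symm
    have hG2 : Summable (fun j => G j ^ 2) := (hG2sum n).congr fun j => (hGsq j).symm
    have hmulsum : Summable (fun j => F j * G j) :=
      EllipticAux.summable_mul_conv F G (fun j => Real.sqrt_nonneg _)
        (fun j => Real.sqrt_nonneg _) hF2 hG2
    have hnormsum : Summable (fun j => ‖fcoef ψ (n - j) * fcoef w j‖) := by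
      refine (hmulsum.congr fun j => ?_)
      rw [← hFG j, norm_mul]
    have hPle : ‖P n‖ ≤ ∑' j, F j * G j := by
      calc ‖P n‖ ≤ ∑' j, ‖fcoef ψ (n - j) * fcoef w j‖ := norm_tsum_le_tsum_norm hnormsum
        _ = ∑' j, F j * G j := tsum_congr fun j => by rw [norm_mul, ← hFG j]
    have hCS := EllipticAux.tsum_mul_sq_le F G (fun j => Real.sqrt_nonneg _)
      (fun j => Real.sqrt_nonneg _) hF2 hG2
    calc ‖P n‖ ^ 2 ≤ (∑' j, F j * G j) ^ 2 := by
          have h0 : 0 ≤ ∑' j, F j * G j :=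
            tsum_nonneg fun j => mul_nonneg (Real.sqrt_nonneg _) (Real.sqrt_nonneg _)
          exact pow_le_pow_left₀ (norm_nonneg _) hPle 2
      _ ≤ (∑' j, F j ^ 2) * (∑' j, G j ^ 2) := hCS
      _ = S n * T n := by
          rw [hSdef, hTdef]
          congr 1
          · exact tsum_congr fun j => hFsq j
          · exact tsum_congr fun j => hGsq j
  -- uniform bound on wt n * T n
  set C1 : ℝ := K * ∑' m : Fin d → ℤ, ((1:ℝ) + ‖zEmbed m‖ ^ (2*(a-τ)))⁻¹ with hC1def
  have hTbd : ∀ n, wt n * T n ≤ C1 := by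
    intro n
    have heqT : wt n * T n = ∑' j, wt n * (wa (n-j) * wt j)⁻¹ :=
      Eq.symm (tsum_mul_left (a := wt n) (f := fun j => (wa (n-j) * wt j)⁻¹))
    rw [heqT]
    have hrhs : Summable (fun j => K * ((1:ℝ) + ‖zEmbed (n-j)‖ ^ (2*(a-τ)))⁻¹) := by
      apply Summable.mul_left
      exact (Equiv.subLeft n).summable_iff.mpr hSaτ
    have hlhs : Summable (fun j => wt n * (wa (n-j) * wt j)⁻¹) :=
      (hG2sum n).mul_left (wt n)
    have h1 : ∑' j, wt n * (wa (n-j) * wt j)⁻¹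
        ≤ ∑' j, K * ((1:ℝ) + ‖zEmbed (n-j)‖ ^ (2*(a-τ)))⁻¹ :=
      Summable.tsum_le_tsum (fun j => hweight n j) hlhs hrhs
    refine h1.trans ?_
    rw [tsum_mul_left, hC1def]
    refine mul_le_mul_of_nonneg_left (le_of_eq ?_) hK0.le
    exact (Equiv.subLeft n).tsum_eq (fun m => ((1:ℝ) + ‖zEmbed m‖ ^ (2*(a-τ)))⁻¹)
  -- summability of S
  have hSsum : Summable S := by
    have hH : Summable (fun q : (Fin d → ℤ) × (Fin d → ℤ) =>
        (wa q.1 * Φ q.1 ^ 2) * (wt q.2 * V q.2 ^ 2)) :=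
      Summable.mul_of_nonneg (f := fun m => wa m * Φ m ^ 2) (g := fun m => wt m * V m ^ 2)
        hA hB (Pi.le_def.mpr hA0) (Pi.le_def.mpr hB0)
    let e : ((Fin d → ℤ) × (Fin d → ℤ)) ≃ ((Fin d → ℤ) × (Fin d → ℤ)) :=
      ⟨fun q => (q.1 - q.2, q.2), fun q => (q.1 + q.2, q.2),
        fun q => by simp, fun q => by simp⟩
    have hHe : Summable (fun q : (Fin d → ℤ) × (Fin d → ℤ) =>
        (wa (q.1 - q.2) * Φ (q.1 - q.2) ^ 2) * (wt q.2 * V q.2 ^ 2)) := by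
      exact (e.summable_iff.mpr hH).congr fun q => rfl
    have h0 : (0:((Fin d → ℤ) × (Fin d → ℤ)) → ℝ) ≤ fun q =>
        (wa (q.1 - q.2) * Φ (q.1 - q.2) ^ 2) * (wt q.2 * V q.2 ^ 2) :=
      Pi.le_def.mpr fun q => mul_nonneg (hA0 _) (hB0 _)
    exact ((summable_prod_of_nonneg h0).mp hHe).2
  -- summability of the convolution with weight
  have hConv : Summable (fun n => wt n * ‖P n‖ ^ 2) := by
    refine Summable.of_nonneg_of_le (fun n => mul_nonneg (hwtpos n).le (sq_nonneg _))
      (fun n => ?_) (hSsum.mul_left C1)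
    calc wt n * ‖P n‖ ^ 2 ≤ wt n * (S n * T n) :=
          mul_le_mul_of_nonneg_left (hPest n) (hwtpos n).le
      _ = S n * (wt n * T n) := by ring
      _ ≤ S n * C1 := mul_le_mul_of_nonneg_left (hTbd n) (hS0 n)
      _ = C1 * S n := by ring
  -- pointwise elliptic estimate
  set M : ℝ := max (d:ℝ) 1 with hMdef
  have hM1 : (1:ℝ) ≤ M := le_max_right _ _
  set C2 : ℝ := 1 + M ^ (τ+2) with hC2def
  have hC2 : (1:ℝ) ≤ C2 := le_add_of_nonneg_right (Real.rpow_nonneg (by linarith) _)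
  have hknorm : ‖k‖ ^ 2 ≤ d / 4 := by
    rw [EuclideanSpace.norm_eq, Real.sq_sqrt (by positivity)]
    have hb : ∀ j : Fin d, ‖k j‖ ^ 2 ≤ 1/4 := by
      intro j
      have h := hk j
      have h1 : -(1/2 : ℝ) < k j := h.1
      have h2 : k j ≤ 1/2 := h.2
      have : |k j| ≤ 1/2 := abs_le.mpr ⟨by linarith, h2⟩
      calc ‖k j‖ ^ 2 = |k j| ^ 2 := by rw [Real.norm_eq_abs]
        _ ≤ (1/2) ^ 2 := by nlinarith [abs_nonneg (k j)]
        _ = 1/4 := by norm_num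
    calc ∑ j, ‖k j‖ ^ 2 ≤ ∑ _j : Fin d, (1/4 : ℝ) :=
          Finset.sum_le_sum fun j _ => hb j
      _ = d / 4 := by simp [Finset.sum_const]; ring
  have hBnd : ∀ n, (1 + ‖zEmbed n‖ ^ (2*(τ+2))) * V n ^ 2
      ≤ C2 * (wt n * V n ^ 2) + 16 * (wt n * ‖P n‖ ^ 2) := by
    intro n
    set u := ‖zEmbed n‖ with hudef
    have hu0 : 0 ≤ u := norm_nonneg _
    -- the symbol identity
    have hr : ‖zEmbed n‖ ^ 2 + 2 * (inner ℝ k (zEmbed n) : ℝ) + ‖k‖ ^ 2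
        = ‖k + zEmbed n‖ ^ 2 := by
      rw [norm_add_sq_real]; ring
    have hsym : ‖k + zEmbed n‖ ^ 2 * V n = ‖P n‖ := by
      have h := congrArg norm (heq n)
      rw [norm_mul, Complex.norm_real, hr, Real.norm_eq_abs,
        _root_.abs_of_nonneg (sq_nonneg _)] at h
      exact h
    rcases le_total (u ^ 2) M with hcase | hcase
    · -- low frequencies
      have h1 : u ^ (2*(τ+2)) ≤ M ^ (τ+2) := by
        have he : u ^ (2*(τ+2)) = (u ^ 2) ^ (τ+2) := by
          rw [← Real.rpow_natCast u 2, ← Real.rpow_mul hu0]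
          norm_num
        rw [he]
        exact Real.rpow_le_rpow (sq_nonneg u) hcase (by linarith)
      have h2 : (1 + u ^ (2*(τ+2))) * V n ^ 2 ≤ C2 * V n ^ 2 := by
        refine mul_le_mul_of_nonneg_right ?_ (sq_nonneg _)
        rw [hC2def]; linarith
      have h3 : C2 * V n ^ 2 ≤ C2 * (wt n * V n ^ 2) := by
        refine mul_le_mul_of_nonneg_left ?_ (by linarith)
        nlinarith [hwt1 n, sq_nonneg (V n)]
      have h4 : 0 ≤ 16 * (wt n * ‖P n‖ ^ 2) := by positivity
      linarith
    · -- high frequencies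
      have hu1 : 1 ≤ u := by nlinarith
      have hupos : (0:ℝ) < u := by linarith
      have hdu : (d:ℝ) ≤ u ^ 2 := le_trans (le_max_left _ _) hcase
      have hku : ‖k‖ ≤ u / 2 := by nlinarith [norm_nonneg k]
      have hlb : u / 2 ≤ ‖k + zEmbed n‖ := by
        have h1 : u ≤ ‖k + zEmbed n‖ + ‖k‖ := by
          calc u = ‖(k + zEmbed n) - k‖ := by rw [hudef]; congr 1; abel
            _ ≤ ‖k + zEmbed n‖ + ‖k‖ := norm_sub_le _ _
        linarith
      have hlb2 : u ^ 2 / 4 ≤ ‖k + zEmbed n‖ ^ 2 := by nlinarith [norm_nonneg (k + zEmbed n)]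
      have hup : u ^ 2 * V n ≤ 4 * ‖P n‖ := by nlinarith [hV0 n]
      have hsplit : u ^ (2*(τ+2)) = u ^ (2*τ) * (u ^ 2) ^ 2 := by
        rw [show (2*(τ+2)) = 2*τ + (4:ℝ) by ring, Real.rpow_add hupos,
          show ((4:ℝ)) = ((4:ℕ):ℝ) by norm_num, Real.rpow_natCast]
        ring
      have hA1 : u ^ (2*τ) ≤ wt n := le_add_of_nonneg_left zero_le_one
      have hA0' : 0 ≤ u ^ (2*τ) := Real.rpow_nonneg hu0 _
      have hsq : (u ^ 2 * V n) ^ 2 ≤ 16 * ‖P n‖ ^ 2 := by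
        have h := mul_self_le_mul_self (mul_nonneg (sq_nonneg u) (hV0 n)) hup
        nlinarith [h]
      rw [hsplit]
      have key : u ^ (2*τ) * ((u^2)^2 * V n ^ 2) ≤ 16 * (wt n * ‖P n‖ ^ 2) := by
        calc u ^ (2*τ) * ((u^2)^2 * V n ^ 2) = u ^ (2*τ) * (u^2 * V n) ^ 2 := by ring
          _ ≤ u ^ (2*τ) * (16 * ‖P n‖ ^ 2) := mul_le_mul_of_nonneg_left hsq hA0'
          _ ≤ wt n * (16 * ‖P n‖ ^ 2) :=
              mul_le_mul_of_nonneg_right hA1 (by positivity)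
          _ = 16 * (wt n * ‖P n‖ ^ 2) := by ring
      have hVwt : V n ^ 2 ≤ C2 * (wt n * V n ^ 2) := by
        nlinarith [sq_nonneg (V n),
          mul_le_mul hC2 (hwt1 n) zero_le_one (by linarith : (0:ℝ) ≤ C2)]
      nlinarith [key, hVwt]
  -- conclusion
  refine Summable.of_nonneg_of_le (fun n => ?_) hBnd ((hB.mul_left C2).add (hConv.mul_left 16))
  exact mul_nonneg (by positivity) (sq_nonneg _)
end

section
/- Suppose the eigenvalues λ_n(k) of L(k) satisfy C_1 n^{2/d} ≤ λ_n(k) for all n and all k ∈ B, and that λ_{n_0}(k) is simple at k = k_0 with group velocity v_g = ∇λ_{n_0}(k_0). Define η_n(k,k_0) := λ_{n_0}(k_0) + (k−k_0)ᵀ v_g − λ_n(k) for n ≠ n_0. Then there exist ε_0 > 0, C > 0 such that for all ε ∈ (0, ε_0), all n ≠ n_0 and all k with |k − k_0| ≤ ε^{1/2}, one has 1/|η_n(k,k_0)| ≤ C n^{−2/d}. -/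
open MeasureTheory Complex Real RealInnerProductSpace

/-- uniform bound 1/|η_n(k,k₀)| ≤ C n^{-2/d} for n ≠ n₀ and k near k₀,
where η_n(k,k₀) = λ_{n₀}(k₀) + (k−k₀)ᵀv_g − λ_n(k). -/
theorem eta_bound (d : ℕ) (hd : 0 < d) (lam : ℕ → Rd d → ℝ)
    (C1 : ℝ) (hC1 : 0 < C1)
    (hlow : ∀ n : ℕ, ∀ k ∈ Bz d, C1 * ((n : ℝ) + 1) ^ ((2:ℝ)/d) ≤ lam n k)
    (hmono : ∀ n : ℕ, ∀ k ∈ Bz d, lam n k ≤ lam (n + 1) k)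
    (hcont : ∀ n, Continuous (lam n))
    (n0 : ℕ) (k0 : Rd d) (hk0 : k0 ∈ Bz d) (vg : Rd d)
    (hvg : HasGradientAt (lam n0) vg k0)
    (hsimple : ∀ n, n ≠ n0 → lam n k0 ≠ lam n0 k0) :
    ∃ ε0 > 0, ∃ C > 0, ∀ ε ∈ Set.Ioo (0:ℝ) ε0, ∀ n : ℕ, n ≠ n0 →
      ∀ k ∈ Bz d, ‖k - k0‖ ≤ ε ^ ((1:ℝ)/2) →
        1 / |lam n0 k0 + (inner ℝ (k - k0) vg : ℝ) - lam n k| ≤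
          C * ((n : ℝ) + 1) ^ (-(2:ℝ)/d) := by
  classical
  set f : ℕ → Rd d → ℝ := fun n k => lam n0 k0 + (inner ℝ (k - k0) vg : ℝ) - lam n k with hf
  have hfc : ∀ n, Continuous (f n) := fun n =>
    (continuous_const.add ((continuous_id.sub continuous_const).inner continuous_const)).sub
      (hcont n)
  have hfk0 : ∀ n, f n k0 = lam n0 k0 - lam n k0 := by
    intro n
    simp [hf, inner_sub_left, real_inner_self_eq_norm_sq]
  have hfk0ne : ∀ n, n ≠ n0 → f n k0 ≠ 0 := by
    intro n hn
    rw [hfk0]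
    exact sub_ne_zero.mpr (Ne.symm (hsimple n hn))
  set δ : ℕ → ℝ := fun n => |f n k0| / 2 with hδ
  have hδpos : ∀ n, n ≠ n0 → 0 < δ n := fun n hn =>
    div_pos (abs_pos.mpr (hfk0ne n hn)) two_pos
  -- radius from continuity
  have hrex : ∀ n, n ≠ n0 → ∃ r > 0, ∀ k, ‖k - k0‖ < r → |f n k - f n k0| < δ n := by
    intro n hn
    have := (Metric.continuousAt_iff.mp ((hfc n).continuousAt (x := k0))) (δ n) (hδpos n hn)
    obtain ⟨r, hr, h⟩ := this
    exact ⟨r, hr, fun k hk => by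
      have := h (x := k) (by rwa [dist_eq_norm]); rwa [Real.dist_eq] at this⟩
  set r : ℕ → ℝ := fun n => if h : n ≠ n0 then (hrex n h).choose else 1 with hrdef
  have hrpos : ∀ n, n ≠ n0 → 0 < r n := by
    intro n hn; simp only [hrdef, dif_pos hn]; exact (hrex n hn).choose_spec.1
  have hrprop : ∀ n (hn : n ≠ n0), ∀ k, ‖k - k0‖ < r n → |f n k - f n k0| < δ n := by
    intro n hn; simp only [hrdef, dif_pos hn]; exact (hrex n hn).choose_spec.2
  -- constant A and threshold N
  set A : ℝ := |lam n0 k0| + ‖vg‖ + 1 with hA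
  have hApos : 0 < A := by positivity
  have hNex : ∃ N : ℕ, ∀ n ≥ N, 2 * A ≤ C1 * ((n : ℝ) + 1) ^ ((2:ℝ)/d) := by
    have h1 : Filter.Tendsto (fun n : ℕ => (n : ℝ) + 1) Filter.atTop Filter.atTop :=
      Filter.tendsto_atTop_add_const_right _ 1 tendsto_natCast_atTop_atTop
    have hpow : (0:ℝ) < 2 / d := by positivity
    have h2 := (tendsto_rpow_atTop hpow).comp h1
    have h3 := h2.const_mul_atTop hC1
    exact (h3.eventually_ge_atTop (2 * A)).exists_forall_of_atTop
  obtain ⟨N, hN⟩ := hNex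
  set S : Finset ℕ := (Finset.range N).erase n0 with hS
  set R : ℝ := if h : S.Nonempty then S.inf' h r else 1 with hR
  have hRpos : 0 < R := by
    rw [hR]; split
    · rename_i h
      obtain ⟨m, hm, hmeq⟩ := Finset.exists_mem_eq_inf' h r
      rw [hmeq]; exact hrpos m (Finset.ne_of_mem_erase hm)
    · norm_num
  have hRle : ∀ n ∈ S, R ≤ r n := by
    intro n hn; rw [hR, dif_pos ⟨n, hn⟩]; exact Finset.inf'_le r hn
  set C2 : ℝ := if h : S.Nonempty then S.sup' h (fun n => ((n:ℝ)+1) ^ ((2:ℝ)/d) / δ n) else 1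
    with hC2
  have hC2le : ∀ n ∈ S, ((n:ℝ)+1) ^ ((2:ℝ)/d) / δ n ≤ C2 := by
    intro n hn; rw [hC2, dif_pos ⟨n, hn⟩]; exact Finset.le_sup' (fun m : ℕ => ((m:ℝ)+1) ^ ((2:ℝ)/d) / δ m) hn
  refine ⟨(min R 1) ^ 2, by positivity, max (2 / C1) C2, lt_of_lt_of_le (by positivity)
    (le_max_left _ _), ?_⟩
  intro ε hε n hn k hkB hk
  have hεs : ε ^ ((1:ℝ)/2) < min R 1 := by
    rw [show ε ^ ((1:ℝ)/2) = Real.sqrt ε from (Real.sqrt_eq_rpow ε).symm]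
    calc Real.sqrt ε < Real.sqrt ((min R 1) ^ 2) :=
          Real.sqrt_lt_sqrt (le_of_lt hε.1) hε.2
      _ = min R 1 := Real.sqrt_sq (le_of_lt (lt_min hRpos one_pos))
  have hk1 : ‖k - k0‖ < 1 := lt_of_le_of_lt hk (lt_of_lt_of_le hεs (min_le_right _ _))
  have hkR : ‖k - k0‖ < R := lt_of_le_of_lt hk (lt_of_lt_of_le hεs (min_le_left _ _))
  set p : ℝ := ((n:ℝ)+1) ^ ((2:ℝ)/d) with hp
  have hppos : 0 < p := Real.rpow_pos_of_pos (by positivity) _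
  have hgoal_rw : ((n:ℝ)+1) ^ (-(2:ℝ)/d) = p⁻¹ := by
    rw [hp, neg_div, Real.rpow_neg (by positivity)]
  rw [hgoal_rw]
  have key : 0 < |f n k| ∧ p ≤ max (2 / C1) C2 * |f n k| := by
    by_cases hnN : N ≤ n
    · -- large n
      have hlin : lam n0 k0 + (inner ℝ (k - k0) vg : ℝ) ≤ A := by
        have h1 : (inner ℝ (k - k0) vg : ℝ) ≤ ‖k - k0‖ * ‖vg‖ := real_inner_le_norm _ _
        have h2 : ‖k - k0‖ * ‖vg‖ ≤ 1 * ‖vg‖ :=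
          mul_le_mul_of_nonneg_right (le_of_lt hk1) (norm_nonneg _)
        have h3 : lam n0 k0 ≤ |lam n0 k0| := le_abs_self _
        rw [hA]; nlinarith [norm_nonneg vg]
      have h2A : 2 * A ≤ C1 * p := hN n hnN
      have hlo := hlow n k hkB
      have hfle : f n k ≤ - (C1 * p / 2) := by
        have : f n k ≤ A - C1 * p := by
          simp only [hf]; linarith
        linarith
      have habs : C1 * p / 2 ≤ |f n k| :=
        le_trans (le_neg.mp hfle) (neg_le_abs (f n k))
      have hfpos : 0 < |f n k| := lt_of_lt_of_le (by positivity) habs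
      refine ⟨hfpos, le_trans ?_ (mul_le_mul_of_nonneg_right (le_max_left (2/C1) C2)
        (abs_nonneg _))⟩
      rw [div_mul_eq_mul_div, le_div_iff₀ hC1]
      linarith
    · -- small n
      push_neg at hnN
      have hnS : n ∈ S := Finset.mem_erase.mpr ⟨hn, Finset.mem_range.mpr hnN⟩
      have hkr : ‖k - k0‖ < r n := lt_of_lt_of_le hkR (hRle n hnS)
      have hclose := hrprop n hn k hkr
      have hδn := hδpos n hn
      have hfk0' : |f n k0| = 2 * δ n := by rw [hδ]; ring
      have hlower : δ n ≤ |f n k| := by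
        have h1 := abs_sub_abs_le_abs_sub (f n k0) (f n k)
        rw [abs_sub_comm (f n k0) (f n k)] at h1
        linarith [h1, hclose, hfk0']
      have hfpos : 0 < |f n k| := lt_of_lt_of_le hδn hlower
      refine ⟨hfpos, le_trans ?_ (mul_le_mul_of_nonneg_right (le_max_right (2/C1) C2)
        (abs_nonneg _))⟩
      calc p = p / δ n * δ n := (div_mul_cancel₀ p (ne_of_gt hδn)).symm
        _ ≤ C2 * |f n k| := mul_le_mul (hC2le n hnS) hlower (le_of_lt hδn)
            (le_trans (le_of_lt (div_pos hppos hδn)) (hC2le n hnS))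
  obtain ⟨hfpos, hkey⟩ := key
  have hfin : (1:ℝ) / |f n k| ≤ max (2 / C1) C2 / p := by
    rw [div_le_div_iff₀ hfpos hppos]; linarith
  calc 1 / |lam n0 k0 + (inner ℝ (k - k0) vg : ℝ) - lam n k| = 1 / |f n k| := rfl
    _ ≤ max (2 / C1) C2 / p := hfin
    _ = max (2 / C1) C2 * p⁻¹ := div_eq_mul_inv _ _
end

section
/- Let E: [0,T₀ε^{-2}] → X be continuous with ‖E(t)‖ ≤ c₀ε² + tC_res ε⁴ + c₁∫₀ᵗ (ε²‖E(τ)‖ + ε‖E(τ)‖² + ‖E(τ)‖³) dτ for all t in the interval, where c₀, c₁, C_res, T₀ > 0. Then there exist M > 0 and ε₀ > 0, namely M = (c₀ + T₀(C_res+1)) e^{c₁T₀} and ε₀ chosen so that c₁(ε₀M² + ε₀²M³) ≤ 1, such that for all ε ∈ (0,ε₀), ‖E(t)‖ ≤ M ε² for all t ∈ [0, T₀ ε^{-2}]. -/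
open MeasureTheory Real

lemma gronwall_key {X : Type*} [NormedAddCommGroup X]
    (c0 c1 Cres T0 M ε T : ℝ) (hc0 : 0 < c0) (hc1 : 0 < c1) (hCres : 0 < Cres) (hT0 : 0 < T0)
    (hM : M = (c0 + T0 * (Cres + 1)) * Real.exp (c1 * T0))
    (hε : 0 < ε) (hεs : c1 * (ε * M ^ 2 + ε ^ 2 * M ^ 3) < 1)
    (hT : T = T0 * ε⁻¹ ^ 2)
    (E : ℝ → X) (hcont : ContinuousOn E (Set.Icc 0 T))
    (hineq : ∀ t ∈ Set.Icc (0:ℝ) T, ‖E t‖ ≤ c0 * ε ^ 2 + t * Cres * ε ^ 4 +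
            c1 * ∫ τ in (0:ℝ)..t, (ε ^ 2 * ‖E τ‖ + ε * ‖E τ‖ ^ 2 + ‖E τ‖ ^ 3))
    (t : ℝ) (ht : t ∈ Set.Icc 0 T)
    (hb : ∀ τ ∈ Set.Icc (0:ℝ) t, ‖E τ‖ ≤ M * ε ^ 2) :
    ‖E t‖ < M * ε ^ 2 := by
  have hMpos : 0 < M := by rw [hM]; positivity
  have hTpos : 0 < T := by rw [hT]; positivity
  -- the clamped norm function
  set u : ℝ → ℝ := fun τ => ‖E (max 0 (min τ T))‖ with hu_def
  have hproj : Continuous fun τ : ℝ => max 0 (min τ T) :=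
    continuous_const.max (continuous_id.min continuous_const)
  have hmem : ∀ x : ℝ, max 0 (min x T) ∈ Set.Icc (0:ℝ) T := fun x =>
    ⟨le_max_left _ _, max_le hTpos.le (min_le_right _ _)⟩
  have hu_cont : Continuous u := (hcont.comp_continuous hproj hmem).norm
  have hu_eq : ∀ τ ∈ Set.Icc (0:ℝ) T, u τ = ‖E τ‖ := by
    intro τ hτ
    simp only [hu_def, min_eq_left hτ.2, max_eq_right hτ.1]
  have hu_nonneg : ∀ τ, 0 ≤ u τ := fun τ => norm_nonneg _
  set f : ℝ → ℝ := fun s => ∫ τ in (0:ℝ)..s, u τ with hf_def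
  have hf_deriv : ∀ s, HasDerivAt f (u s) s := fun s =>
    intervalIntegral.integral_hasDerivAt_right (hu_cont.intervalIntegrable 0 s)
      hu_cont.stronglyMeasurable.stronglyMeasurableAtFilter hu_cont.continuousAt
  have hf_cont : Continuous f := continuous_iff_continuousAt.2 fun s => (hf_deriv s).continuousAt
  have hf_nonneg : ∀ s, 0 ≤ s → 0 ≤ f s := fun s hs =>
    intervalIntegral.integral_nonneg hs fun τ _ => hu_nonneg τ
  set A : ℝ := c0 * ε ^ 2 + T0 * ε ^ 2 * (Cres + c1 * (ε * M ^ 2 + ε ^ 2 * M ^ 3)) with hA_def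
  set K : ℝ := c1 * ε ^ 2 with hK_def
  have hK : 0 < K := by positivity
  have hApos : 0 < A := by positivity
  have hsT2 : ∀ s, s ≤ T → s * ε ^ 2 ≤ T0 := by
    intro s hs
    have h1 : s * ε ^ 2 ≤ (T0 * ε⁻¹ ^ 2) * ε ^ 2 := by
      rw [hT] at hs; exact mul_le_mul_of_nonneg_right hs (by positivity)
    have h2 : (T0 * ε⁻¹ ^ 2) * ε ^ 2 = T0 := by field_simp
    linarith
  have hub : ∀ s ∈ Set.Icc (0:ℝ) t, u s ≤ A + K * f s := by
    intro s hs
    have hsT : s ∈ Set.Icc (0:ℝ) T := ⟨hs.1, hs.2.trans ht.2⟩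
    have h1 := hineq s hsT
    have hEn : ContinuousOn (fun τ => ‖E τ‖) (Set.Icc 0 s) :=
      (hcont.mono (Set.Icc_subset_Icc le_rfl hsT.2)).norm
    have hI1 : IntervalIntegrable
        (fun τ => ε ^ 2 * ‖E τ‖ + ε * ‖E τ‖ ^ 2 + ‖E τ‖ ^ 3) volume 0 s := by
      apply ContinuousOn.intervalIntegrable
      rw [Set.uIcc_of_le hs.1]
      exact ((continuousOn_const.mul hEn).add (continuousOn_const.mul (hEn.pow 2))).add
        (hEn.pow 3)
    have hI2 : IntervalIntegrable
        (fun τ => ε ^ 2 * u τ + (ε ^ 5 * M ^ 2 + ε ^ 6 * M ^ 3)) volume 0 s :=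
      ((continuous_const.mul hu_cont).add continuous_const).intervalIntegrable 0 s
    have hint : (∫ τ in (0:ℝ)..s, (ε ^ 2 * ‖E τ‖ + ε * ‖E τ‖ ^ 2 + ‖E τ‖ ^ 3)) ≤
        ∫ τ in (0:ℝ)..s, (ε ^ 2 * u τ + (ε ^ 5 * M ^ 2 + ε ^ 6 * M ^ 3)) := by
      apply intervalIntegral.integral_mono_on hs.1 hI1 hI2
      intro τ hτ
      have hτT : τ ∈ Set.Icc (0:ℝ) T := ⟨hτ.1, hτ.2.trans hsT.2⟩
      have hbτ : ‖E τ‖ ≤ M * ε ^ 2 := hb τ ⟨hτ.1, hτ.2.trans hs.2⟩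
      rw [hu_eq τ hτT]
      nlinarith [pow_le_pow_left₀ (norm_nonneg (E τ)) hbτ 3,
        pow_le_pow_left₀ (norm_nonneg (E τ)) hbτ 2, hε.le, norm_nonneg (E τ),
        mul_le_mul_of_nonneg_left (pow_le_pow_left₀ (norm_nonneg (E τ)) hbτ 2) hε.le]
    have hcomp : (∫ τ in (0:ℝ)..s, (ε ^ 2 * u τ + (ε ^ 5 * M ^ 2 + ε ^ 6 * M ^ 3))) =
        ε ^ 2 * f s + s * (ε ^ 5 * M ^ 2 + ε ^ 6 * M ^ 3) := by
      rw [intervalIntegral.integral_add (f := fun τ => ε ^ 2 * u τ) (g := fun _ => ε ^ 5 * M ^ 2 + ε ^ 6 * M ^ 3) ((continuous_const.mul hu_cont).intervalIntegrable 0 s)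
        (continuous_const.intervalIntegrable 0 s), intervalIntegral.integral_const_mul,
        intervalIntegral.integral_const]
      simp [smul_eq_mul, hf_def]
    rw [hcomp] at hint
    have h2 : ‖E s‖ ≤ c0 * ε ^ 2 + s * Cres * ε ^ 4 +
        c1 * (ε ^ 2 * f s + s * (ε ^ 5 * M ^ 2 + ε ^ 6 * M ^ 3)) := by
      have := mul_le_mul_of_nonneg_left hint hc1.le
      linarith
    have hsε : s * ε ^ 2 ≤ T0 := hsT2 s hsT.2
    have e1 : (s * ε ^ 2) * (Cres * ε ^ 2) ≤ T0 * (Cres * ε ^ 2) :=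
      mul_le_mul_of_nonneg_right hsε (by positivity)
    have e2 : (s * ε ^ 2) * (c1 * ε ^ 3 * M ^ 2) ≤ T0 * (c1 * ε ^ 3 * M ^ 2) :=
      mul_le_mul_of_nonneg_right hsε (by positivity)
    have e3 : (s * ε ^ 2) * (c1 * ε ^ 4 * M ^ 3) ≤ T0 * (c1 * ε ^ 4 * M ^ 3) :=
      mul_le_mul_of_nonneg_right hsε (by positivity)
    rw [hu_eq s hsT, hA_def, hK_def]
    nlinarith [h2, e1, e2, e3]
  have hgron := norm_le_gronwallBound_of_norm_deriv_right_le (f := f) (f' := u) (δ := 0)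
    (K := K) (ε := A) (a := 0) (b := t) hf_cont.continuousOn
    (fun x _ => (hf_deriv x).hasDerivWithinAt)
    (by simp [hf_def, intervalIntegral.integral_same])
    (fun x hx => by
      rw [Real.norm_of_nonneg (hu_nonneg x), Real.norm_of_nonneg (hf_nonneg x hx.1)]
      have := hub x ⟨hx.1, hx.2.le⟩
      linarith)
    t ⟨ht.1, le_rfl⟩
  rw [gronwallBound_of_K_ne_0 hK.ne'] at hgron
  rw [Real.norm_of_nonneg (hf_nonneg t ht.1), sub_zero] at hgron
  have hft : f t ≤ A / K * (Real.exp (K * t) - 1) := by simpa using hgron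
  have h5 : K * f t ≤ K * (A / K * (Real.exp (K * t) - 1)) :=
    mul_le_mul_of_nonneg_left hft hK.le
  have h6 : K * (A / K * (Real.exp (K * t) - 1)) = A * (Real.exp (K * t) - 1) := by
    field_simp
  have hut : u t ≤ A * Real.exp (K * t) := by
    have := hub t ⟨ht.1, le_rfl⟩
    rw [h6] at h5
    linarith
  have hexp : Real.exp (K * t) ≤ Real.exp (c1 * T0) := by
    apply Real.exp_le_exp.2
    have := hsT2 t ht.2
    rw [hK_def]; nlinarith
  have hfin : u t ≤ A * Real.exp (c1 * T0) :=
    hut.trans (mul_le_mul_of_nonneg_left hexp hApos.le)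
  have hAlt : A < (c0 + T0 * (Cres + 1)) * ε ^ 2 := by
    have hmul : T0 * ε ^ 2 * (c1 * (ε * M ^ 2 + ε ^ 2 * M ^ 3)) < T0 * ε ^ 2 * 1 :=
      mul_lt_mul_of_pos_left hεs (by positivity)
    calc A = (c0 * ε ^ 2 + T0 * ε ^ 2 * Cres) + T0 * ε ^ 2 * (c1 * (ε * M ^ 2 + ε ^ 2 * M ^ 3)) := by
            rw [hA_def]; ring
      _ < (c0 * ε ^ 2 + T0 * ε ^ 2 * Cres) + T0 * ε ^ 2 * 1 := add_lt_add_right hmul _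
      _ = (c0 + T0 * (Cres + 1)) * ε ^ 2 := by ring
  have hfinal : A * Real.exp (c1 * T0) < M * ε ^ 2 := by
    rw [hM]
    calc A * Real.exp (c1 * T0) < ((c0 + T0 * (Cres + 1)) * ε ^ 2) * Real.exp (c1 * T0) :=
          mul_lt_mul_of_pos_right hAlt (Real.exp_pos _)
      _ = (c0 + T0 * (Cres + 1)) * Real.exp (c1 * T0) * ε ^ 2 := by ring
  rw [← hu_eq t ht]
  linarith

/-- Gronwall-type bootstrap estimate for the error E. -/
theorem gronwall_bootstrap (X : Type*) [NormedAddCommGroup X]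
    (c0 c1 Cres T0 : ℝ) (hc0 : 0 < c0) (hc1 : 0 < c1) (hCres : 0 < Cres) (hT0 : 0 < T0) :
    ∃ M > 0, ∃ ε0 > 0,
      M = (c0 + T0 * (Cres + 1)) * Real.exp (c1 * T0) ∧
      c1 * (ε0 * M ^ 2 + ε0 ^ 2 * M ^ 3) ≤ 1 ∧
      ∀ ε ∈ Set.Ioo (0:ℝ) ε0, ∀ E : ℝ → X,
        ContinuousOn E (Set.Icc 0 (T0 * ε⁻¹ ^ 2)) →
        (∀ t ∈ Set.Icc (0:ℝ) (T0 * ε⁻¹ ^ 2),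
          ‖E t‖ ≤ c0 * ε ^ 2 + t * Cres * ε ^ 4 +
            c1 * ∫ τ in (0:ℝ)..t, (ε ^ 2 * ‖E τ‖ + ε * ‖E τ‖ ^ 2 + ‖E τ‖ ^ 3)) →
        ∀ t ∈ Set.Icc (0:ℝ) (T0 * ε⁻¹ ^ 2), ‖E t‖ ≤ M * ε ^ 2 := by
  set M := (c0 + T0 * (Cres + 1)) * Real.exp (c1 * T0) with hM
  have hMpos : 0 < M := by rw [hM]; positivity
  have hden : 0 < c1 * (M ^ 2 + M ^ 3) := by positivity
  set ε0 := min 1 (1 / (c1 * (M ^ 2 + M ^ 3))) with hε0def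
  have hε0pos : 0 < ε0 := lt_min one_pos (by positivity)
  have hε0le1 : ε0 ≤ 1 := min_le_left _ _
  have hε0le2 : ε0 ≤ 1 / (c1 * (M ^ 2 + M ^ 3)) := min_le_right _ _
  have hsmall : c1 * (ε0 * M ^ 2 + ε0 ^ 2 * M ^ 3) ≤ 1 := by
    have h1 : ε0 ^ 2 ≤ ε0 := by nlinarith
    have h2 : c1 * (ε0 * M ^ 2 + ε0 ^ 2 * M ^ 3) ≤ c1 * (ε0 * (M ^ 2 + M ^ 3)) := by
      nlinarith [mul_nonneg hc1.le (pow_nonneg hMpos.le 3)]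
    have h3 : c1 * (ε0 * (M ^ 2 + M ^ 3)) ≤ 1 := by
      have h4 := mul_le_mul_of_nonneg_left hε0le2 hden.le
      have h5 : c1 * (M ^ 2 + M ^ 3) * (1 / (c1 * (M ^ 2 + M ^ 3))) = 1 := by
        field_simp
      calc c1 * (ε0 * (M ^ 2 + M ^ 3)) = c1 * (M ^ 2 + M ^ 3) * ε0 := by ring
        _ ≤ c1 * (M ^ 2 + M ^ 3) * (1 / (c1 * (M ^ 2 + M ^ 3))) := h4
        _ = 1 := h5
    linarith
  refine ⟨M, hMpos, ε0, hε0pos, hM, hsmall, ?_⟩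
  intro ε hε E hcont hineq
  obtain ⟨hεpos, hεlt⟩ := hε
  set T := T0 * ε⁻¹ ^ 2 with hT
  have hTpos : 0 < T := by rw [hT]; positivity
  have hεs : c1 * (ε * M ^ 2 + ε ^ 2 * M ^ 3) < 1 := by
    have hsq : ε ^ 2 ≤ ε0 ^ 2 := by nlinarith
    have f1 : 0 < c1 * M ^ 2 * (ε0 - ε) := by
      have h : 0 < ε0 - ε := by linarith
      positivity
    have f2 : 0 ≤ c1 * M ^ 3 * (ε0 ^ 2 - ε ^ 2) := by
      have h : 0 ≤ ε0 ^ 2 - ε ^ 2 := by linarith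
      positivity
    linarith [hsmall, f1, f2, (by ring : c1 * (ε0 * M ^ 2 + ε0 ^ 2 * M ^ 3)
      - c1 * M ^ 2 * (ε0 - ε) - c1 * M ^ 3 * (ε0 ^ 2 - ε ^ 2)
      = c1 * (ε * M ^ 2 + ε ^ 2 * M ^ 3))]
  have hkey : ∀ t ∈ Set.Icc (0:ℝ) T, (∀ τ ∈ Set.Icc (0:ℝ) t, ‖E τ‖ ≤ M * ε ^ 2) →
      ‖E t‖ < M * ε ^ 2 := fun t ht hb =>
    gronwall_key c0 c1 Cres T0 M ε T hc0 hc1 hCres hT0 hM hεpos hεs hT E hcont hineq t ht hb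
  set C := M * ε ^ 2 with hC
  have hE0 : ‖E 0‖ ≤ C := by
    have h0 := hineq 0 ⟨le_rfl, hTpos.le⟩
    simp only [intervalIntegral.integral_same, mul_zero, zero_mul, add_zero] at h0
    have hc0M : c0 ≤ M := by
      rw [hM]
      nlinarith [Real.one_le_exp (by positivity : (0:ℝ) ≤ c1 * T0),
        mul_nonneg (by positivity : (0:ℝ) ≤ c0 + T0 * (Cres + 1))
          (sub_nonneg.2 (Real.one_le_exp (by positivity : (0:ℝ) ≤ c1 * T0)))]
    have : c0 * ε ^ 2 ≤ M * ε ^ 2 := mul_le_mul_of_nonneg_right hc0M (by positivity)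
    rw [hC]; linarith
  set S := {s : ℝ | s ∈ Set.Icc (0:ℝ) T ∧ ∀ τ ∈ Set.Icc (0:ℝ) s, ‖E τ‖ ≤ C} with hS
  have h0S : (0:ℝ) ∈ S := ⟨⟨le_rfl, hTpos.le⟩, fun τ hτ => by
    have hτ0 : τ = 0 := le_antisymm hτ.2 hτ.1
    rw [hτ0]; exact hE0⟩
  have hne : S.Nonempty := ⟨0, h0S⟩
  have hbdd : BddAbove S := ⟨T, fun x hx => hx.1.2⟩
  set t0 := sSup S with ht0def
  have ht00 : 0 ≤ t0 := le_csSup hbdd h0S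
  have ht0T : t0 ≤ T := csSup_le hne fun x hx => hx.1.2
  have hlt : ∀ τ, 0 ≤ τ → τ < t0 → ‖E τ‖ ≤ C := by
    intro τ hτ0 hτ
    obtain ⟨a, haS, hτa⟩ := exists_lt_of_lt_csSup hne hτ
    exact haS.2 τ ⟨hτ0, hτa.le⟩
  have ht0S : ∀ τ ∈ Set.Icc (0:ℝ) t0, ‖E τ‖ ≤ C := by
    intro τ hτ
    rcases lt_or_eq_of_le hτ.2 with h | h
    · exact hlt τ hτ.1 h
    · subst h
      rcases eq_or_lt_of_le ht00 with h0 | h0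
      · rw [← h0]; exact hE0
      · have hcw : ContinuousWithinAt (fun x => ‖E x‖) (Set.Ico 0 t0) t0 :=
          ((hcont.norm) t0 ⟨ht00, ht0T⟩).mono fun x (hx : x ∈ Set.Ico (0:ℝ) t0) =>
            ⟨hx.1, hx.2.le.trans ht0T⟩
        have hne' : (nhdsWithin t0 (Set.Ico (0:ℝ) t0)).NeBot := by
          rw [← mem_closure_iff_nhdsWithin_neBot, closure_Ico h0.ne]
          exact ⟨ht00, le_rfl⟩
        exact le_of_tendsto hcw (Filter.eventually_of_mem self_mem_nhdsWithin
          fun x hx => hlt x hx.1 hx.2)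
  have hstrict : ‖E t0‖ < C := hkey t0 ⟨ht00, ht0T⟩ ht0S
  rcases eq_or_lt_of_le ht0T with hTeq | hTlt
  · intro t ht
    exact ht0S t (by rw [hTeq]; exact ht)
  · exfalso
    have hev : ∀ᶠ x in nhdsWithin t0 (Set.Icc (0:ℝ) T), ‖E x‖ < C :=
      Filter.Tendsto.eventually_lt_const hstrict ((hcont.norm) t0 ⟨ht00, ht0T⟩)
    obtain ⟨δ, hδ, hball⟩ := Metric.mem_nhdsWithin_iff.1 hev
    set t1 := min T (t0 + δ / 2) with ht1def
    have ht1 : t0 < t1 := lt_min hTlt (by linarith)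
    have ht1T : t1 ≤ T := min_le_left _ _
    have ht1S : t1 ∈ S := by
      refine ⟨⟨le_trans ht00 ht1.le, ht1T⟩, fun τ hτ => ?_⟩
      rcases le_or_gt τ t0 with hcase | hcase
      · exact ht0S τ ⟨hτ.1, hcase⟩
      · have hτb : τ ∈ Metric.ball t0 δ := by
          rw [Metric.mem_ball, Real.dist_eq, abs_of_pos (by linarith)]
          have : τ ≤ t0 + δ / 2 := hτ.2.trans (min_le_right _ _)
          linarith
        exact (hball ⟨hτb, ⟨hτ.1, hτ.2.trans ht1T⟩⟩).le
    have := le_csSup hbdd ht1S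
    linarith
end
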